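/- arXiv:1612.08082 — 3 statements merged into one kernel-verified Lean document; each statement's English description precedes it below -/
import Mathlib

section
/- Let p̂₀ be any estimated propensity function with p̂₀(a|x) > 0 for all (a,x), and let m > 0 be a truncation level. Define the truncated importance-sampling estimator R̂_m(a; P̂₀) = (1/n) Σ_{j=1}^n min(𝕀(A_j = a)/p̂₀(A_j|X_j), m) R_j^obs from n i.i.d. copies (X_j, A_j, R_j^obs) of (X, A, R^obs), and its bias bias(R̂_m(a; P̂₀)) = r̄(a) − E[R̂_m(a; P̂₀)]. Then under common support and unconfoundedness, bias(R̂_m(a; P̂₀)) = E[ r̄(a, X) ( (1 − p₀(a|X)/p̂₀(a|X)) 𝕀(p̂₀(a|X) > m⁻¹) + (1 − m·p₀(a|X)) 𝕀(p̂₀(a|X) ≤ m⁻¹) ) ]. -/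
open MeasureTheory ProbabilityTheory

/-- Conditional average `E[f | E] = (∫_E f dμ) / μ(E)` (with the convention `0/0 = 0`). -/
noncomputable def condAvg {Ω : Type*} [MeasurableSpace Ω] (μ : Measure Ω)
    (E : Set Ω) (f : Ω → ℝ) : ℝ :=
  (∫ ω in E, f ω ∂μ) / (μ E).toReal


lemma sum_fiber_integral {Ω S : Type*} [MeasurableSpace Ω] [MeasurableSpace S]
    [Fintype S] [MeasurableSingletonClass S] {μ : Measure Ω}
    {X : Ω → S} (hX : Measurable X) {h : Ω → ℝ} (hh : Integrable h μ) :
    ∫ ω, h ω ∂μ = ∑ x, ∫ ω in X ⁻¹' {x}, h ω ∂μ := by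
  have key : ∀ ω, h ω = ∑ x, (X ⁻¹' {x}).indicator h ω := by
    intro ω
    rw [Finset.sum_eq_single (X ω)]
    · simp [Set.indicator_of_mem, Set.mem_preimage]
    · intro b _ hb
      refine Set.indicator_of_notMem ?_ h
      simp only [Set.mem_preimage, Set.mem_singleton_iff]
      exact fun h' => hb h'.symm
    · simp
  calc ∫ ω, h ω ∂μ = ∫ ω, ∑ x, (X ⁻¹' {x}).indicator h ω ∂μ :=
        integral_congr_ae (Filter.Eventually.of_forall key)
    _ = ∑ x, ∫ ω, (X ⁻¹' {x}).indicator h ω ∂μ :=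
        integral_finset_sum _ fun x _ => hh.indicator (hX (measurableSet_singleton x))
    _ = ∑ x, ∫ ω in X ⁻¹' {x}, h ω ∂μ :=
        Finset.sum_congr rfl fun x _ => integral_indicator (hX (measurableSet_singleton x))

lemma integral_comp_fintype {Ω S : Type*} [MeasurableSpace Ω] [MeasurableSpace S]
    [Fintype S] [MeasurableSingletonClass S] {μ : Measure Ω} [IsFiniteMeasure μ]
    {X : Ω → S} (hX : Measurable X) (g : S → ℝ) :
    ∫ ω, g (X ω) ∂μ = ∑ x, g x * (μ (X ⁻¹' {x})).toReal := by
  have hg : Measurable g := measurable_of_countable g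
  have hbd : ∀ ω, ‖g (X ω)‖ ≤ ∑ x, ‖g x‖ := fun ω =>
    Finset.single_le_sum (f := fun x => ‖g x‖) (fun x _ => norm_nonneg _) (Finset.mem_univ _)
  have hint : Integrable (fun ω => g (X ω)) μ :=
    (integrable_const _).mono' (hg.comp hX).aestronglyMeasurable
      (Filter.Eventually.of_forall hbd)
  rw [sum_fiber_integral hX hint]
  refine Finset.sum_congr rfl fun x _ => ?_
  rw [setIntegral_congr_fun (hX (measurableSet_singleton x))
    (fun ω hω => by
      simp only [Set.mem_preimage, Set.mem_singleton_iff] at hω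
      show g (X ω) = g x
      rw [hω] :
      Set.EqOn (fun ω => g (X ω)) (fun _ => g x) (X ⁻¹' {x}))]
  rw [setIntegral_const, smul_eq_mul, mul_comm]
  rfl

lemma unconf_setIntegral {Ω S : Type*} [MeasurableSpace Ω] [MeasurableSpace S]
    [MeasurableSingletonClass S] {μ : Measure Ω} [IsFiniteMeasure μ] {k : ℕ}
    {X : Ω → S} {A : Ω → Fin k} {R : Fin k → Ω → ℝ}
    (hX : Measurable X) (hA : Measurable A) (hR : ∀ b, Measurable (R b))
    {p : ℝ} (hp : 0 ≤ p) (a : Fin k) (x : S)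
    (hpol : μ {ω | A ω = a ∧ X ω = x} = ENNReal.ofReal p * μ {ω | X ω = x})
    (hunc : ∀ (Bset : Set (Fin k → ℝ)), MeasurableSet Bset →
      μ {ω | (fun b => R b ω) ∈ Bset ∧ A ω = a ∧ X ω = x} * μ {ω | X ω = x} =
        μ {ω | (fun b => R b ω) ∈ Bset ∧ X ω = x} * μ {ω | A ω = a ∧ X ω = x}) :
    ∫ ω in A ⁻¹' {a} ∩ X ⁻¹' {x}, R a ω ∂μ = p * ∫ ω in X ⁻¹' {x}, R a ω ∂μ := by
  have hS2 : MeasurableSet (X ⁻¹' {x}) := hX (measurableSet_singleton x)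
  have hset1 : {ω | A ω = a ∧ X ω = x} = A ⁻¹' {a} ∩ X ⁻¹' {x} := by
    ext ω; simp [Set.mem_inter_iff]
  have hset2 : {ω | X ω = x} = X ⁻¹' {x} := rfl
  by_cases h0 : μ (X ⁻¹' {x}) = 0
  · have h1 : μ (A ⁻¹' {a} ∩ X ⁻¹' {x}) = 0 := measure_mono_null Set.inter_subset_right h0
    rw [Measure.restrict_eq_zero.mpr h1, Measure.restrict_eq_zero.mpr h0]
    simp
  · set T : Ω → (Fin k → ℝ) := fun ω b => R b ω with hTdef
    have hT : Measurable T := measurable_pi_lambda _ hR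
    have hmeq : (μ (X ⁻¹' {x})) • (μ.restrict (A ⁻¹' {a} ∩ X ⁻¹' {x})).map T
        = (μ (A ⁻¹' {a} ∩ X ⁻¹' {x})) • (μ.restrict (X ⁻¹' {x})).map T := by
      ext B hB
      rw [Measure.smul_apply, Measure.smul_apply, Measure.map_apply hT hB,
        Measure.map_apply hT hB, Measure.restrict_apply (hT hB), Measure.restrict_apply (hT hB)]
      have e1 : T ⁻¹' B ∩ (A ⁻¹' {a} ∩ X ⁻¹' {x})
          = {ω | (fun b => R b ω) ∈ B ∧ A ω = a ∧ X ω = x} := by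
        ext ω; simp [hTdef, Set.mem_inter_iff, and_assoc]
      have e2 : T ⁻¹' B ∩ X ⁻¹' {x} = {ω | (fun b => R b ω) ∈ B ∧ X ω = x} := by
        ext ω; simp [hTdef, Set.mem_inter_iff]
      rw [e1, e2]
      simp only [smul_eq_mul]
      rw [← hset1, ← hset2, mul_comm, hunc B hB, mul_comm]
    have hint : ∀ s : Set Ω, ∫ v, v a ∂((μ.restrict s).map T) = ∫ ω in s, R a ω ∂μ := fun s =>
      integral_map hT.aemeasurable (measurable_pi_apply a).aestronglyMeasurable
    have hkey := congrArg (fun ν : Measure (Fin k → ℝ) => ∫ v, v a ∂ν) hmeq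
    simp only [integral_smul_measure, hint, smul_eq_mul] at hkey
    have hμ1 : (μ (A ⁻¹' {a} ∩ X ⁻¹' {x})).toReal = p * (μ (X ⁻¹' {x})).toReal := by
      rw [← hset1, ← hset2, hpol, ENNReal.toReal_mul, ENNReal.toReal_ofReal hp, hset2]
    rw [hμ1] at hkey
    have ht : (μ (X ⁻¹' {x})).toReal ≠ 0 :=
      ENNReal.toReal_ne_zero.mpr ⟨h0, measure_ne_top _ _⟩
    exact mul_left_cancel₀ ht (hkey.trans (by ring))

/-- Lemma 3 of the paper: the exact bias of the truncated
inverse-propensity-score estimator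
`R̂_m(a; P̂₀) = (1/n) Σ_j min(𝕀(A_j = a)/phat₀(A_j|X_j), m) R_j^obs`
built from `n` i.i.d. copies of `(X, A, R^obs)`, when estimated propensities `phat₀`
are used in place of the true propensities `p₀`:
`bias(R̂_m(a; P̂₀)) = E[ r̄(a,X) ( (1 - p₀(a|X)/phat₀(a|X)) 𝕀(phat₀(a|X) > m⁻¹)
                                + (1 - m p₀(a|X)) 𝕀(phat₀(a|X) ≤ m⁻¹) ) ]`. -/
theorem truncated_ips_bias
    {Ω : Type*} [MeasurableSpace Ω] (μ : Measure Ω) [IsProbabilityMeasure μ]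
    (d k : ℕ) (𝒳i : Fin d → Type*)
    [∀ i, Fintype (𝒳i i)] [∀ i, MeasurableSpace (𝒳i i)]
    [∀ i, MeasurableSingletonClass (𝒳i i)]
    (X : Ω → ∀ i, 𝒳i i) (A : Ω → Fin k) (R : Fin k → Ω → ℝ)
    (hX : Measurable X) (hA : Measurable A) (hR : ∀ a, Measurable (R a))
    (hRbdd : ∀ a ω, R a ω ∈ Set.Icc (0 : ℝ) 1)
    (p₀ : Fin k → (∀ i, 𝒳i i) → ℝ)
    -- common support
    (hp₀ : ∀ a x, 0 < p₀ a x)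
    -- conditional on X, the action A is drawn from the logging policy p₀(⬝ | X)
    (hpolicy : ∀ a x,
      μ {ω | A ω = a ∧ X ω = x} = ENNReal.ofReal (p₀ a x) * μ {ω | X ω = x})
    -- unconfoundedness: conditional on X, the potential rewards are independent of A
    (hunconf : ∀ (a : Fin k) (x : ∀ i, 𝒳i i) (Bset : Set (Fin k → ℝ)),
      MeasurableSet Bset →
      μ {ω | (fun b => R b ω) ∈ Bset ∧ A ω = a ∧ X ω = x} * μ {ω | X ω = x} =
        μ {ω | (fun b => R b ω) ∈ Bset ∧ X ω = x} * μ {ω | A ω = a ∧ X ω = x})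
    -- estimated propensities and truncation level
    (phat₀ : Fin k → (∀ i, 𝒳i i) → ℝ) (hphat₀ : ∀ a x, 0 < phat₀ a x)
    (m : ℝ) (hm : 0 < m)
    -- the data: n i.i.d. copies of (X, A, R^obs)
    (n : ℕ) (hn : 0 < n)
    (Xj : Fin n → Ω → ∀ i, 𝒳i i) (Aj : Fin n → Ω → Fin k) (Rj : Fin n → Ω → ℝ)
    (hident : ∀ j, IdentDistrib (fun ω => (Xj j ω, Aj j ω, Rj j ω))
      (fun ω => (X ω, A ω, R (A ω) ω)) μ μ)
    (hindep : iIndepFun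
      (fun j ω => (Xj j ω, Aj j ω, Rj j ω)) μ)
    (a : Fin k) :
    (∫ ω, condAvg μ {ω' | X ω' = X ω} (R a) ∂μ) -
        ∫ ω, (∑ j, min ((if Aj j ω = a then (1 : ℝ) else 0) / phat₀ (Aj j ω) (Xj j ω)) m
          * Rj j ω) / n ∂μ =
      ∫ ω, condAvg μ {ω' | X ω' = X ω} (R a) *
        ((1 - p₀ a (X ω) / phat₀ a (X ω)) * (if m⁻¹ < phat₀ a (X ω) then (1 : ℝ) else 0)
          + (1 - m * p₀ a (X ω)) * (if phat₀ a (X ω) ≤ m⁻¹ then (1 : ℝ) else 0)) ∂μ := by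
  classical
  -- basic objects
  set I : (∀ i, 𝒳i i) → ℝ := fun x => ∫ ω in X ⁻¹' {x}, R a ω ∂μ with hIdef
  set t : (∀ i, 𝒳i i) → ℝ := fun x => (μ (X ⁻¹' {x})).toReal with htdef
  set g : (∀ i, 𝒳i i) → ℝ := fun x => condAvg μ {ω' | X ω' = x} (R a) with hgdef
  set c : (∀ i, 𝒳i i) → ℝ := fun x => min (1 / phat₀ a x) m with hcdef
  set w : (∀ i, 𝒳i i) → ℝ := fun x =>
      (1 - p₀ a x / phat₀ a x) * (if m⁻¹ < phat₀ a x then (1 : ℝ) else 0)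
        + (1 - m * p₀ a x) * (if phat₀ a x ≤ m⁻¹ then (1 : ℝ) else 0) with hwdef
  have hgt : ∀ x, g x * t x = I x := by
    intro x
    by_cases h0 : μ (X ⁻¹' {x}) = 0
    · have hI0 : I x = 0 := by
        simp [hIdef, Measure.restrict_eq_zero.mpr h0]
      simp [htdef, h0, hI0]
    · have ht0 : t x ≠ 0 := by
        simp only [htdef]
        exact ENNReal.toReal_ne_zero.mpr ⟨h0, measure_ne_top _ _⟩
      show condAvg μ {ω' | X ω' = x} (R a) * t x = I x
      unfold condAvg
      show I x / t x * t x = I x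
      field_simp
  -- pointwise identity for the weight
  have hw : ∀ x, w x = 1 - c x * p₀ a x := by
    intro x
    have hph := hphat₀ a x
    by_cases hcase : m⁻¹ < phat₀ a x
    · have h1 : 1 / phat₀ a x < m := by
        rw [div_lt_iff₀ hph]
        have h2 := mul_lt_mul_of_pos_left hcase hm
        rwa [mul_inv_cancel₀ hm.ne'] at h2
      have hmin : c x = 1 / phat₀ a x := min_eq_left h1.le
      simp only [hwdef, hmin, if_pos hcase, if_neg (not_le.mpr hcase)]
      field_simp
      ring
    · have hle : phat₀ a x ≤ m⁻¹ := not_lt.mp hcase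
      have h1 : m ≤ 1 / phat₀ a x := by
        rw [le_div_iff₀ hph]
        calc m * phat₀ a x ≤ m * m⁻¹ := by
              exact mul_le_mul_of_nonneg_left hle hm.le
          _ = 1 := mul_inv_cancel₀ hm.ne'
      have hmin : c x = m := min_eq_right h1
      simp only [hwdef, hmin, if_neg hcase, if_pos hle]
      ring
  -- measurability helpers
  have hRA : Measurable (fun ω => R (A ω) ω) := by
    have heq : (fun ω => R (A ω) ω) = fun ω => ∑ b, if A ω = b then R b ω else 0 := by
      funext ω
      rw [Finset.sum_ite_eq]
      simp
    rw [heq]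
    refine Finset.measurable_sum _ fun b _ => Measurable.ite ?_ (hR b) measurable_const
    exact hA (measurableSet_singleton b)
  set φ : (∀ i, 𝒳i i) × Fin k × ℝ → ℝ := fun p =>
      min ((if p.2.1 = a then (1 : ℝ) else 0) / phat₀ p.2.1 p.1) m * p.2.2 with hφdef
  have hφ : Measurable φ := by
    have h1 : Measurable (fun q : (∀ i, 𝒳i i) × Fin k =>
        min ((if q.2 = a then (1 : ℝ) else 0) / phat₀ q.2 q.1) m) :=
      measurable_of_countable _
    exact (h1.comp (measurable_fst.prodMk (measurable_fst.comp measurable_snd))).mul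
      (measurable_snd.comp measurable_snd)
  set F : Ω → ℝ := fun ω =>
      min ((if A ω = a then (1 : ℝ) else 0) / phat₀ (A ω) (X ω)) m * R (A ω) ω with hFdef
  have hFmeas : Measurable F := by
    show Measurable fun ω => φ (X ω, A ω, R (A ω) ω)
    exact hφ.comp (hX.prodMk (hA.prodMk hRA))
  have hminnn : ∀ ω, 0 ≤ min ((if A ω = a then (1 : ℝ) else 0) / phat₀ (A ω) (X ω)) m := by
    intro ω
    refine le_min (div_nonneg ?_ (hphat₀ _ _).le) hm.le
    split <;> norm_num
  have hFbdd : ∀ ω, ‖F ω‖ ≤ m := by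
    intro ω
    have h1 := hminnn ω
    have h2 : min ((if A ω = a then (1 : ℝ) else 0) / phat₀ (A ω) (X ω)) m ≤ m := min_le_right _ _
    have h3 : |R (A ω) ω| ≤ 1 := by
      rcases hRbdd (A ω) ω with ⟨hl, hr⟩
      rw [abs_le]; constructor <;> linarith
    calc ‖F ω‖ = |min ((if A ω = a then (1 : ℝ) else 0) / phat₀ (A ω) (X ω)) m| * |R (A ω) ω| := by
          rw [hFdef]; exact abs_mul _ _
      _ ≤ m * 1 := by
          apply mul_le_mul _ h3 (abs_nonneg _) hm.le
          rwa [abs_of_nonneg h1]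
      _ = m := mul_one m
  have hFint : Integrable F μ :=
    (integrable_const m).mono' hFmeas.aestronglyMeasurable (Filter.Eventually.of_forall hFbdd)
  -- i.i.d. copies all have mean ∫ F
  have hterm : ∀ j : Fin n,
      IdentDistrib (fun ω => min ((if Aj j ω = a then (1 : ℝ) else 0)
        / phat₀ (Aj j ω) (Xj j ω)) m * Rj j ω) F μ μ := fun j => by
    have h := (hident j).comp hφ
    exact h
  have htermInt : ∀ j : Fin n, Integrable (fun ω => min ((if Aj j ω = a then (1 : ℝ) else 0)
      / phat₀ (Aj j ω) (Xj j ω)) m * Rj j ω) μ := fun j => (hterm j).integrable_iff.mpr hFint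
  have htermEq : ∀ j : Fin n, (∫ ω, min ((if Aj j ω = a then (1 : ℝ) else 0)
      / phat₀ (Aj j ω) (Xj j ω)) m * Rj j ω ∂μ) = ∫ ω, F ω ∂μ := fun j => (hterm j).integral_eq
  -- expectation of the estimator
  have hEst : (∫ ω, (∑ j, min ((if Aj j ω = a then (1 : ℝ) else 0)
        / phat₀ (Aj j ω) (Xj j ω)) m * Rj j ω) / n ∂μ) = ∫ ω, F ω ∂μ := by
    rw [integral_div, integral_finset_sum _ fun j _ => htermInt j]
    rw [Finset.sum_congr rfl fun j _ => htermEq j]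
    rw [Finset.sum_const, Finset.card_univ, Fintype.card_fin, nsmul_eq_mul]
    exact mul_div_cancel_left₀ _ (Nat.cast_ne_zero.mpr hn.ne')
  -- ∫ F as a sum over fibers
  have hFsum : (∫ ω, F ω ∂μ) = ∑ x, c x * (p₀ a x * I x) := by
    rw [sum_fiber_integral hX hFint]
    refine Finset.sum_congr rfl fun x _ => ?_
    have hcong : Set.EqOn F (fun ω => c x * (A ⁻¹' {a}).indicator (R a) ω) (X ⁻¹' {x}) := by
      intro ω hω
      have hXω : X ω = x := hω
      by_cases hAω : A ω = a
      · show F ω = c x * (A ⁻¹' {a}).indicator (R a) ω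
        rw [Set.indicator_of_mem (by exact hAω : ω ∈ A ⁻¹' {a})]
        simp [hFdef, hAω, hXω, hcdef]
      · show F ω = c x * (A ⁻¹' {a}).indicator (R a) ω
        rw [Set.indicator_of_notMem (by exact hAω : ω ∉ A ⁻¹' {a})]
        simp [hFdef, hAω, min_eq_left hm.le, zero_div]
    rw [setIntegral_congr_fun (hX (measurableSet_singleton x)) hcong]
    rw [integral_const_mul, setIntegral_indicator (hA (measurableSet_singleton a)),
      Set.inter_comm]
    rw [unconf_setIntegral hX hA hR (hp₀ a x).le a x (hpolicy a x) (hunconf a x)]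
  -- ∫ r̄(a, X) as a sum over fibers
  have hterm1 : (∫ ω, condAvg μ {ω' | X ω' = X ω} (R a) ∂μ) = ∑ x, g x * t x :=
    integral_comp_fintype hX g
  have hRHS : (∫ ω, condAvg μ {ω' | X ω' = X ω} (R a) *
        ((1 - p₀ a (X ω) / phat₀ a (X ω)) * (if m⁻¹ < phat₀ a (X ω) then (1 : ℝ) else 0)
          + (1 - m * p₀ a (X ω)) * (if phat₀ a (X ω) ≤ m⁻¹ then (1 : ℝ) else 0)) ∂μ)
      = ∑ x, (g x * w x) * t x :=
    integral_comp_fintype hX (fun x => g x * w x)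
  rw [hterm1, hEst, hFsum, hRHS]
  rw [← Finset.sum_sub_distrib]
  refine Finset.sum_congr rfl fun x _ => ?_
  rw [hw x]
  linear_combination c x * p₀ a x * hgt x
end

section
/- Let p̂₀ be any estimated propensity function with p̂₀(a|x) > 0 for all (a,x), let m > 0, let i ∈ {1,…,d} be a feature type, and let x_i ∈ 𝒳_i with Pr(X_i = x_i) > 0. Then under common support and unconfoundedness, r̄(a, x_i) − E[ min(𝕀(A = a)/p̂₀(A|X), m) R^obs | X_i = x_i ] = E[ r̄(a, X) ( (1 − p₀(a|X)/p̂₀(a|X)) 𝕀(p̂₀(a|X) > m⁻¹) + (1 − m·p₀(a|X)) 𝕀(p̂₀(a|X) ≤ m⁻¹) ) | X_i = x_i ]. -/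
open MeasureTheory ProbabilityTheory

lemma condAvg_sub_eq {Ω : Type*} [MeasurableSpace Ω] (μ : Measure Ω)
    (E : Set Ω) (f g h : Ω → ℝ)
    (hfg : (∫ ω in E, f ω ∂μ) - (∫ ω in E, g ω ∂μ) = ∫ ω in E, h ω ∂μ) :
    condAvg μ E f - condAvg μ E g = condAvg μ E h := by
  simp only [condAvg, div_sub_div_same, hfg]

/-- conditional version of Lemma 3 of the paper: for any estimated
propensity function `p̂₀ > 0`, truncation level `m > 0`, feature type `i` and value
`x_i` with `Pr(X_i = x_i) > 0`, under common support and unconfoundedness,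
`r̄(a, x_i) - E[min(𝕀(A = a)/p̂₀(A|X), m) R^obs | X_i = x_i]
  = E[ r̄(a,X) ( (1 - p₀(a|X)/p̂₀(a|X)) 𝕀(p̂₀(a|X) > m⁻¹)
              + (1 - m p₀(a|X)) 𝕀(p̂₀(a|X) ≤ m⁻¹) ) | X_i = x_i ]`. -/
theorem truncated_ips_conditional_bias
    {Ω : Type*} [MeasurableSpace Ω] (μ : Measure Ω) [IsProbabilityMeasure μ]
    (d k : ℕ) (𝒳i : Fin d → Type*)
    [∀ i, Fintype (𝒳i i)] [∀ i, MeasurableSpace (𝒳i i)]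
    [∀ i, MeasurableSingletonClass (𝒳i i)]
    (X : Ω → ∀ i, 𝒳i i) (A : Ω → Fin k) (R : Fin k → Ω → ℝ)
    (hX : Measurable X) (hA : Measurable A) (hR : ∀ a, Measurable (R a))
    (hRbdd : ∀ a ω, R a ω ∈ Set.Icc (0 : ℝ) 1)
    (p₀ : Fin k → (∀ i, 𝒳i i) → ℝ)
    -- common support
    (hp₀ : ∀ a x, 0 < p₀ a x)
    -- conditional on X, the action A is drawn from the logging policy p₀(⬝ | X)
    (hpolicy : ∀ a x,
      μ {ω | A ω = a ∧ X ω = x} = ENNReal.ofReal (p₀ a x) * μ {ω | X ω = x})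
    -- unconfoundedness: conditional on X, the potential rewards are independent of A
    (hunconf : ∀ (a : Fin k) (x : ∀ i, 𝒳i i) (Bset : Set (Fin k → ℝ)),
      MeasurableSet Bset →
      μ {ω | (fun b => R b ω) ∈ Bset ∧ A ω = a ∧ X ω = x} * μ {ω | X ω = x} =
        μ {ω | (fun b => R b ω) ∈ Bset ∧ X ω = x} * μ {ω | A ω = a ∧ X ω = x})
    -- estimated propensities and truncation level
    (phat₀ : Fin k → (∀ i, 𝒳i i) → ℝ) (hphat₀ : ∀ a x, 0 < phat₀ a x)
    (m : ℝ) (hm : 0 < m)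
    (a : Fin k) (i : Fin d) (xi : 𝒳i i)
    (hxi : 0 < μ {ω | X ω i = xi}) :
    condAvg μ {ω | X ω i = xi} (fun ω => condAvg μ {ω' | X ω' = X ω} (R a)) -
        condAvg μ {ω | X ω i = xi}
          (fun ω => min ((if A ω = a then (1 : ℝ) else 0) / phat₀ (A ω) (X ω)) m
            * R (A ω) ω) =
      condAvg μ {ω | X ω i = xi}
        (fun ω => condAvg μ {ω' | X ω' = X ω} (R a) *
          ((1 - p₀ a (X ω) / phat₀ a (X ω)) * (if m⁻¹ < phat₀ a (X ω) then (1 : ℝ) else 0)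
            + (1 - m * p₀ a (X ω)) * (if phat₀ a (X ω) ≤ m⁻¹ then (1 : ℝ) else 0))) := by
  classical
  have hsingX : ∀ x : (∀ j, 𝒳i j), MeasurableSet {ω | X ω = x} := fun x =>
    hX (measurableSet_singleton x)
  have hAX : ∀ x : (∀ j, 𝒳i j), MeasurableSet {ω | A ω = a ∧ X ω = x} := fun x =>
    (hA (measurableSet_singleton a)).inter (hsingX x)
  have hRint : ∀ b, Integrable (R b) μ := fun b =>
    (integrable_const (1 : ℝ)).mono' (hR b).aestronglyMeasurable
      (Filter.Eventually.of_forall fun ω => by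
        rw [Real.norm_eq_abs, abs_of_nonneg (hRbdd b ω).1]; exact (hRbdd b ω).2)
  -- layer cake for set integrals of the reward
  have layer : ∀ S : Set Ω, MeasurableSet S →
      ∫ ω in S, R a ω ∂μ
        = ∫ t in Set.Ioi (0 : ℝ), (μ ({ω | t < R a ω} ∩ S)).toReal := by
    intro S hS
    rw [((hRint a).restrict).integral_eq_integral_meas_lt
      (Filter.Eventually.of_forall fun ω => (hRbdd a ω).1)]
    refine integral_congr_ae (Filter.Eventually.of_forall fun t => ?_)
    beta_reduce
    rw [measureReal_restrict_apply (measurableSet_lt measurable_const (hR a)), measureReal_def]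
  -- key consequence of unconfoundedness
  have key : ∀ x, (∫ ω in {ω | A ω = a ∧ X ω = x}, R a ω ∂μ) * (μ {ω | X ω = x}).toReal
      = (∫ ω in {ω | X ω = x}, R a ω ∂μ) * (μ {ω | A ω = a ∧ X ω = x}).toReal := by
    intro x
    rw [layer _ (hAX x), layer _ (hsingX x), ← integral_mul_const, ← integral_mul_const]
    refine integral_congr_ae (Filter.Eventually.of_forall fun t => ?_)
    beta_reduce
    rw [← ENNReal.toReal_mul, ← ENNReal.toReal_mul]
    congr 1
    have h1 : {ω | t < R a ω} ∩ {ω | A ω = a ∧ X ω = x}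
        = {ω | (fun b => R b ω) ∈ {v : Fin k → ℝ | t < v a} ∧ A ω = a ∧ X ω = x} := rfl
    have h2 : {ω | t < R a ω} ∩ {ω | X ω = x}
        = {ω | (fun b => R b ω) ∈ {v : Fin k → ℝ | t < v a} ∧ X ω = x} := rfl
    rw [h1, h2]
    exact hunconf a x _ (measurableSet_lt measurable_const (measurable_pi_apply a))
  -- decomposition of the conditioning event into atoms
  set S : Finset (∀ j, 𝒳i j) := Finset.univ.filter (fun x => x i = xi) with hSdef
  have hEeq : {ω | X ω i = xi} = ⋃ x ∈ S, {ω | X ω = x} := by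
    ext ω
    simp only [Set.mem_setOf_eq, Set.mem_iUnion, hSdef, Finset.mem_filter, Finset.mem_univ,
      true_and, exists_prop]
    exact ⟨fun h => ⟨X ω, h, rfl⟩, fun ⟨x, hx, hXx⟩ => by rw [hXx]; exact hx⟩
  have hdisj : (↑S : Set (∀ j, 𝒳i j)).Pairwise (Function.onFun Disjoint fun x => {ω | X ω = x}) := by
    intro x _ y _ hxy
    simp only [Function.onFun, Set.disjoint_left, Set.mem_setOf_eq]
    intro ω h1 h2
    exact hxy (h1.symm.trans h2)
  -- per-atom descriptions of the three integrands
  have hEq1 : ∀ x : (∀ j, 𝒳i j), Set.EqOn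
      (fun _ : Ω => condAvg μ {ω' | X ω' = x} (R a))
      (fun ω => condAvg μ {ω' | X ω' = X ω} (R a)) {ω | X ω = x} := by
    intro x ω hω
    simp only [Set.mem_setOf_eq] at hω
    simp only [hω]
  have hEq2 : ∀ x : (∀ j, 𝒳i j), Set.EqOn
      ({ω | A ω = a}.indicator fun ω => min ((phat₀ a x)⁻¹) m * R a ω)
      (fun ω => min ((if A ω = a then (1 : ℝ) else 0) / phat₀ (A ω) (X ω)) m
        * R (A ω) ω) {ω | X ω = x} := by
    intro x ω hω
    simp only [Set.mem_setOf_eq] at hω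
    by_cases hAa : A ω = a
    · simp [Set.indicator, hAa, hω, one_div]
    · simp [Set.indicator, hAa, hω, zero_div, min_eq_left hm.le]
  have hEq3 : ∀ x : (∀ j, 𝒳i j), Set.EqOn
      (fun _ : Ω => condAvg μ {ω' | X ω' = x} (R a) *
          ((1 - p₀ a x / phat₀ a x) * (if m⁻¹ < phat₀ a x then (1 : ℝ) else 0)
            + (1 - m * p₀ a x) * (if phat₀ a x ≤ m⁻¹ then (1 : ℝ) else 0)))
      (fun ω => condAvg μ {ω' | X ω' = X ω} (R a) *
          ((1 - p₀ a (X ω) / phat₀ a (X ω)) * (if m⁻¹ < phat₀ a (X ω) then (1 : ℝ) else 0)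
            + (1 - m * p₀ a (X ω)) * (if phat₀ a (X ω) ≤ m⁻¹ then (1 : ℝ) else 0)))
      {ω | X ω = x} := by
    intro x ω hω
    simp only [Set.mem_setOf_eq] at hω
    simp only [hω]
  -- integrability on atoms
  have hint1 : ∀ x ∈ S, IntegrableOn
      (fun ω => condAvg μ {ω' | X ω' = X ω} (R a)) {ω | X ω = x} μ := fun x _ =>
    (integrableOn_const (C := condAvg μ {ω' | X ω' = x} (R a))
      (measure_ne_top μ _)).congr_fun (hEq1 x) (hsingX x)
  have hint2 : ∀ x ∈ S, IntegrableOn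
      (fun ω => min ((if A ω = a then (1 : ℝ) else 0) / phat₀ (A ω) (X ω)) m
        * R (A ω) ω) {ω | X ω = x} μ := fun x _ =>
    ((((hRint a).const_mul _).indicator
      (hA (measurableSet_singleton a))).integrableOn).congr_fun (hEq2 x) (hsingX x)
  have hint3 : ∀ x ∈ S, IntegrableOn
      (fun ω => condAvg μ {ω' | X ω' = X ω} (R a) *
          ((1 - p₀ a (X ω) / phat₀ a (X ω)) * (if m⁻¹ < phat₀ a (X ω) then (1 : ℝ) else 0)
            + (1 - m * p₀ a (X ω)) * (if phat₀ a (X ω) ≤ m⁻¹ then (1 : ℝ) else 0)))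
      {ω | X ω = x} μ := fun x _ =>
    (integrableOn_const (C := (_ : ℝ)) (measure_ne_top μ _) enorm_ne_top).congr_fun (hEq3 x) (hsingX x)
  -- values of the atom integrals
  have hI1 : ∀ x : (∀ j, 𝒳i j),
      ∫ ω in {ω | X ω = x}, condAvg μ {ω' | X ω' = X ω} (R a) ∂μ
        = condAvg μ {ω' | X ω' = x} (R a) * (μ {ω | X ω = x}).toReal := by
    intro x
    rw [← setIntegral_congr_fun (hsingX x) (hEq1 x), setIntegral_const, smul_eq_mul, mul_comm, measureReal_def]
  have hI2 : ∀ x : (∀ j, 𝒳i j),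
      ∫ ω in {ω | X ω = x},
        min ((if A ω = a then (1 : ℝ) else 0) / phat₀ (A ω) (X ω)) m * R (A ω) ω ∂μ
      = min ((phat₀ a x)⁻¹) m * ∫ ω in {ω | A ω = a ∧ X ω = x}, R a ω ∂μ := by
    intro x
    rw [← setIntegral_congr_fun (hsingX x) (hEq2 x),
      setIntegral_indicator (show MeasurableSet {ω | A ω = a} from hA (measurableSet_singleton a))]
    have hset : {ω | X ω = x} ∩ {ω | A ω = a} = {ω | A ω = a ∧ X ω = x} := by
      ext ω; exact and_comm
    rw [hset, integral_const_mul]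
  have hI3 : ∀ x : (∀ j, 𝒳i j),
      ∫ ω in {ω | X ω = x}, (condAvg μ {ω' | X ω' = X ω} (R a) *
          ((1 - p₀ a (X ω) / phat₀ a (X ω)) * (if m⁻¹ < phat₀ a (X ω) then (1 : ℝ) else 0)
            + (1 - m * p₀ a (X ω)) * (if phat₀ a (X ω) ≤ m⁻¹ then (1 : ℝ) else 0))) ∂μ
      = condAvg μ {ω' | X ω' = x} (R a) *
          ((1 - p₀ a x / phat₀ a x) * (if m⁻¹ < phat₀ a x then (1 : ℝ) else 0)
            + (1 - m * p₀ a x) * (if phat₀ a x ≤ m⁻¹ then (1 : ℝ) else 0))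
          * (μ {ω | X ω = x}).toReal := by
    intro x
    rw [← setIntegral_congr_fun (hsingX x) (hEq3 x), setIntegral_const, smul_eq_mul, mul_comm, measureReal_def]
  -- the per-atom identity
  have atom : ∀ x : (∀ j, 𝒳i j),
      condAvg μ {ω' | X ω' = x} (R a) * (μ {ω | X ω = x}).toReal
        - min ((phat₀ a x)⁻¹) m * ∫ ω in {ω | A ω = a ∧ X ω = x}, R a ω ∂μ
      = condAvg μ {ω' | X ω' = x} (R a) *
          ((1 - p₀ a x / phat₀ a x) * (if m⁻¹ < phat₀ a x then (1 : ℝ) else 0)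
            + (1 - m * p₀ a x) * (if phat₀ a x ≤ m⁻¹ then (1 : ℝ) else 0))
          * (μ {ω | X ω = x}).toReal := by
    intro x
    have hg1 : (1 - p₀ a x / phat₀ a x) * (if m⁻¹ < phat₀ a x then (1 : ℝ) else 0)
        + (1 - m * p₀ a x) * (if phat₀ a x ≤ m⁻¹ then (1 : ℝ) else 0)
        = 1 - min ((phat₀ a x)⁻¹) m * p₀ a x := by
      by_cases hc : phat₀ a x ≤ m⁻¹
      · rw [if_neg (not_lt.mpr hc), if_pos hc]
        have hmin : min ((phat₀ a x)⁻¹) m = m := min_eq_right (by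
          have := inv_anti₀ (hphat₀ a x) hc
          rwa [inv_inv] at this)
        rw [hmin]; ring
      · have hc' : m⁻¹ < phat₀ a x := lt_of_not_ge hc
        rw [if_pos hc', if_neg hc]
        have hmin : min ((phat₀ a x)⁻¹) m = (phat₀ a x)⁻¹ := min_eq_left (by
          have := inv_strictAnti₀ (inv_pos.mpr hm) hc'
          rw [inv_inv] at this
          exact this.le)
        rw [hmin, div_eq_mul_inv]; ring
    by_cases hP : (μ {ω | X ω = x}).toReal = 0
    · have hμ0 : μ {ω | X ω = x} = 0 := by
        rcases (ENNReal.toReal_eq_zero_iff _).mp hP with h | h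
        · exact h
        · exact absurd h (measure_ne_top μ _)
      have hμa0 : μ {ω | A ω = a ∧ X ω = x} = 0 :=
        measure_mono_null (fun ω h => h.2) hμ0
      have hIa0 : ∫ ω in {ω | A ω = a ∧ X ω = x}, R a ω ∂μ = 0 := by
        rw [Measure.restrict_eq_zero.mpr hμa0, integral_zero_measure]
      rw [hIa0]
      simp [hP]
    · have hPa : (μ {ω | A ω = a ∧ X ω = x}).toReal
          = p₀ a x * (μ {ω | X ω = x}).toReal := by
        rw [hpolicy a x, ENNReal.toReal_mul, ENNReal.toReal_ofReal (hp₀ a x).le]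
      have hIa : ∫ ω in {ω | A ω = a ∧ X ω = x}, R a ω ∂μ
          = (∫ ω in {ω | X ω = x}, R a ω ∂μ) * p₀ a x := by
        apply mul_right_cancel₀ hP
        rw [key x, hPa]; ring
      rw [hIa, hg1]
      simp only [condAvg]
      field_simp
  -- assemble
  refine condAvg_sub_eq μ _ _ _ _ ?_
  rw [hEeq,
    integral_biUnion_finset S (fun x _ => hsingX x) hdisj hint1,
    integral_biUnion_finset S (fun x _ => hsingX x) hdisj hint2,
    integral_biUnion_finset S (fun x _ => hsingX x) hdisj hint3,
    ← Finset.sum_sub_distrib]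
  refine Finset.sum_congr rfl fun x _ => ?_
  rw [hI1 x, hI2 x, hI3 x]
  exact atom x
end

section
/- Let f : [0,1] → ℝ be L-Lipschitz, let s ≥ 1 be an integer, and partition [0,1] into s consecutive intervals (bins) each of length 1/s. Let X be a [0,1]-valued random variable, let C(X) denote the bin containing X, and for a bin c with Pr(X ∈ c) > 0 write f̄(c) = E[f(X) | X ∈ c]. Let ℓ : ℝ → ℝ be nondecreasing and B-Lipschitz, and let c₀ ∈ ℝ. Then E[ℓ(f(X) − c₀)] ≤ L B / s + E[ℓ(f̄(C(X)) − c₀)]. -/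
open MeasureTheory ProbabilityTheory

/-- The index (in `{0, …, s-1}`) of the bin of length `1/s` containing `t ∈ [0,1]`. -/
noncomputable def binIdx (s : ℕ) (t : ℝ) : ℕ := min ⌊t * s⌋₊ (s - 1)

lemma binIdx_bounds (s : ℕ) (hs : 1 ≤ s) {t : ℝ} (ht : t ∈ Set.Icc (0:ℝ) 1) :
    (binIdx s t : ℝ) / s ≤ t ∧ t ≤ ((binIdx s t : ℝ) + 1) / s := by
  obtain ⟨ht0, ht1⟩ := ht
  have hspos : (0:ℝ) < s := by exact_mod_cast hs
  by_cases h : ⌊t * s⌋₊ ≤ s - 1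
  · have hj : binIdx s t = ⌊t * s⌋₊ := min_eq_left h
    constructor
    · rw [hj, div_le_iff₀ hspos]
      exact Nat.floor_le (by positivity)
    · rw [hj, le_div_iff₀ hspos]
      exact (Nat.lt_floor_add_one (t * s)).le
  · push_neg at h
    have hj : binIdx s t = s - 1 := min_eq_right (le_of_lt h)
    have hcast : ((s - 1 : ℕ) : ℝ) = (s : ℝ) - 1 := by
      rw [Nat.cast_sub hs]; simp
    have hsle : (s : ℕ) ≤ ⌊t * s⌋₊ := by omega
    have hts : (s : ℝ) ≤ t * s := by
      calc (s:ℝ) ≤ (⌊t * s⌋₊ : ℝ) := by exact_mod_cast hsle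
        _ ≤ t * s := Nat.floor_le (by positivity)
    have ht1' : (1:ℝ) ≤ t := by
      nlinarith
    have : t = 1 := le_antisymm ht1 ht1'
    subst this
    rw [hj, hcast]
    constructor
    · rw [div_le_iff₀ hspos]; linarith
    · rw [le_div_iff₀ hspos]; linarith

lemma binIdx_dist (s : ℕ) (hs : 1 ≤ s) {t t' : ℝ} (ht : t ∈ Set.Icc (0:ℝ) 1)
    (ht' : t' ∈ Set.Icc (0:ℝ) 1) (h : binIdx s t = binIdx s t') : |t - t'| ≤ 1 / s := by
  obtain ⟨h1, h2⟩ := binIdx_bounds s hs ht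
  obtain ⟨h3, h4⟩ := binIdx_bounds s hs ht'
  rw [h] at h1 h2
  have hspos : (0:ℝ) < s := by exact_mod_cast hs
  have key : ((binIdx s t' : ℝ) + 1) / s - (binIdx s t' : ℝ) / s = 1 / s := by ring
  rw [abs_sub_le_iff]
  constructor <;> linarith

/-- the binning step in the proof of Theorem 2 of the paper:
if `f : [0,1] → ℝ` is `L`-Lipschitz, `[0,1]` is partitioned into `s` bins of length
`1/s`, `X` is a `[0,1]`-valued random variable, `f̄(c) = E[f(X) | X ∈ c]`, and
`ℓ` is nondecreasing and `B`-Lipschitz, then for every `c₀`,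
`E[ℓ(f(X) - c₀)] ≤ L B / s + E[ℓ(f̄(C(X)) - c₀)]`,
where `C(X)` is the bin containing `X`. -/
theorem binning_step
    {Ω : Type*} [MeasurableSpace Ω] (μ : Measure Ω) [IsProbabilityMeasure μ]
    (f : ℝ → ℝ) (L : ℝ) (hL : 0 ≤ L)
    (hf : ∀ x ∈ Set.Icc (0 : ℝ) 1, ∀ y ∈ Set.Icc (0 : ℝ) 1, |f x - f y| ≤ L * |x - y|)
    (s : ℕ) (hs : 1 ≤ s)
    (X : Ω → ℝ) (hXmeas : Measurable X) (hX : ∀ ω, X ω ∈ Set.Icc (0 : ℝ) 1)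
    (ℓ : ℝ → ℝ) (hmono : Monotone ℓ)
    (B : ℝ) (hlip : ∀ r r', |ℓ r - ℓ r'| ≤ B * |r - r'|)
    (c₀ : ℝ) :
    (∫ ω, ℓ (f (X ω) - c₀) ∂μ) ≤
      L * B / s +
        ∫ ω, ℓ (condAvg μ {ω' | binIdx s (X ω') = binIdx s (X ω)}
          (fun ω' => f (X ω')) - c₀) ∂μ := by
  have hspos : (0:ℝ) < s := by exact_mod_cast hs
  have hB : 0 ≤ B := by
    have h := hlip 0 1
    simp only [abs_nonneg, zero_sub, abs_neg, abs_one, mul_one] at h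
    exact le_trans (abs_nonneg _) h
  -- ℓ is continuous
  have hℓlip : LipschitzWith (Real.toNNReal B) ℓ := by
    apply LipschitzWith.of_dist_le_mul
    intro x y
    simpa [Real.dist_eq, Real.coe_toNNReal B hB] using hlip x y
  have hℓcont : Continuous ℓ := hℓlip.continuous
  -- f ∘ X is measurable via a continuous extension of f
  set g : ℝ → ℝ := fun t => f (max 0 (min 1 t)) with hgdef
  have hfg : ∀ ω, f (X ω) = g (X ω) := by
    intro ω
    obtain ⟨h0, h1⟩ := hX ω
    simp [hgdef, min_eq_right h1, max_eq_right h0]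
  have hfc : ContinuousOn f (Set.Icc 0 1) := by
    have : LipschitzOnWith (Real.toNNReal L) f (Set.Icc 0 1) := by
      apply LipschitzOnWith.of_dist_le_mul
      intro x hx y hy
      simpa [Real.dist_eq, Real.coe_toNNReal L hL] using hf x hx y hy
    exact this.continuousOn
  have hgc : Continuous g := by
    apply hfc.comp_continuous (continuous_const.max (continuous_const.min continuous_id))
    intro t
    exact ⟨le_max_left _ _, max_le (by norm_num) (min_le_left _ _)⟩
  have hfXmeas : Measurable fun ω => f (X ω) := by
    have : Measurable fun ω => g (X ω) := hgc.measurable.comp hXmeas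
    simpa [← hfg] using this
  -- bin index process
  have hbin : Measurable (binIdx s) := by
    unfold binIdx
    exact (Nat.measurable_floor.comp (measurable_id.mul_const _)).min measurable_const
  set j : Ω → ℕ := fun ω => binIdx s (X ω) with hjdef
  have hj : Measurable j := hbin.comp hXmeas
  set E : ℕ → Set Ω := fun k => {ω | j ω = k} with hEdef
  have hEmeas : ∀ k, MeasurableSet (E k) := fun k => hj (measurableSet_singleton k)
  set A : ℕ → ℝ := fun k => condAvg μ (E k) (fun ω' => f (X ω')) with hAdef
  set F : Ω → ℝ := fun ω => A (j ω) with hFdef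
  have hFmeas : Measurable F := (measurable_from_top (f := A)).comp hj
  -- bounds
  set M : ℝ := |f 0| + L with hMdef
  have hM0 : 0 ≤ M := by positivity
  have hMb : ∀ t ∈ Set.Icc (0:ℝ) 1, |f t| ≤ M := by
    intro t ht
    have h1 := hf t ht 0 (by norm_num)
    have h2 : |t - 0| ≤ 1 := by
      rw [sub_zero, abs_of_nonneg ht.1]; exact ht.2
    have : |f t - f 0| ≤ L := by
      calc |f t - f 0| ≤ L * |t - 0| := h1
        _ ≤ L * 1 := by nlinarith [abs_nonneg (t - 0)]
        _ = L := mul_one L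
    calc |f t| ≤ |f t - f 0| + |f 0| := by
          have := abs_sub_abs_le_abs_sub (f t) (f 0); linarith [abs_add_le (f t - f 0) (f 0), abs_sub_le (f t) (f 0) 0]
      _ ≤ L + |f 0| := by linarith
      _ = M := by rw [hMdef]; ring
  have hfXb : ∀ ω, |f (X ω)| ≤ M := fun ω => hMb _ (hX ω)
  have hfXint : Integrable (fun ω => f (X ω)) μ :=
    (integrable_const M).mono' hfXmeas.aestronglyMeasurable
      (Filter.Eventually.of_forall fun ω => by simpa using hfXb ω)
  have hEfin : ∀ k, μ (E k) < ⊤ := fun k => measure_lt_top μ _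
  have hAb : ∀ k, |A k| ≤ M := by
    intro k
    by_cases h : μ (E k) = 0
    · simp [hAdef, condAvg, h, hM0]
    · have hnorm : ‖∫ ω in E k, f (X ω) ∂μ‖ ≤ M * (μ (E k)).toReal :=
        norm_setIntegral_le_of_norm_le_const (hEfin k)
          (fun x _ => by simpa using hfXb x)
      have hpos : 0 < (μ (E k)).toReal := ENNReal.toReal_pos h (hEfin k).ne
      rw [hAdef]
      simp only [condAvg, abs_div, abs_of_pos hpos]
      rw [div_le_iff₀ hpos]
      simpa [Real.norm_eq_abs] using hnorm
  -- the a.e. pointwise bound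
  have hN : μ {ω | μ (E (j ω)) = 0} = 0 := by
    have hsub : {ω | μ (E (j ω)) = 0} ⊆ ⋃ k ∈ {k : ℕ | μ (E k) = 0}, E k := by
      intro ω hω
      exact Set.mem_biUnion hω rfl
    refine measure_mono_null hsub ?_
    refine (measure_biUnion_null_iff (Set.to_countable _)).2 ?_
    intro k hk; exact hk
  have hae : ∀ᵐ ω ∂μ, ℓ (f (X ω) - c₀) ≤ ℓ (F ω - c₀) + L * B / s := by
    rw [ae_iff]
    refine measure_mono_null ?_ hN
    intro ω hω
    simp only [Set.mem_setOf_eq, not_le] at hω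
    by_contra h
    simp only [Set.mem_setOf_eq] at h
    -- h : μ (E (j ω)) ≠ 0 ; derive contradiction with hω
    have hm := ENNReal.toReal_pos h (hEfin _).ne
    set m := (μ (E (j ω))).toReal
    -- |f (X ω) - A (j ω)| ≤ L / s
    have hdiff : |f (X ω) - A (j ω)| ≤ L / s := by
      have hconst : ∫ _ in E (j ω), f (X ω) ∂μ = m * f (X ω) := by
        rw [setIntegral_const]; simp [smul_eq_mul]; exact Or.inl rfl
      have hsubint : ∫ ω' in E (j ω), (f (X ω) - f (X ω')) ∂μ
          = m * f (X ω) - ∫ ω' in E (j ω), f (X ω') ∂μ := by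
        rw [integral_sub (integrable_const _) (hfXint.restrict), hconst]
      have hbd : ‖∫ ω' in E (j ω), (f (X ω) - f (X ω')) ∂μ‖ ≤ (L / s) * m := by
        apply norm_setIntegral_le_of_norm_le_const (hEfin _)
        · intro x hx
          have hxk : binIdx s (X x) = binIdx s (X ω) := hx
          have hd : |X ω - X x| ≤ 1 / s := binIdx_dist s hs (hX ω) (hX x) hxk.symm
          calc ‖f (X ω) - f (X x)‖ = |f (X ω) - f (X x)| := rfl
            _ ≤ L * |X ω - X x| := hf _ (hX ω) _ (hX x)
            _ ≤ L * (1 / s) := by nlinarith [abs_nonneg (X ω - X x)]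
            _ = L / s := by ring
      have hAe : A (j ω) = (∫ ω' in E (j ω), f (X ω') ∂μ) / m := rfl
      rw [hAe]
      have : f (X ω) - (∫ ω' in E (j ω), f (X ω') ∂μ) / m
          = (∫ ω' in E (j ω), (f (X ω) - f (X ω')) ∂μ) / m := by
        rw [hsubint]; field_simp
      rw [this, abs_div, abs_of_pos hm, div_le_iff₀ hm]
      calc |∫ ω' in E (j ω), (f (X ω) - f (X ω')) ∂μ| ≤ L / s * m := hbd
        _ = L / s * m := rfl
    -- conclude
    have h1 : f (X ω) - c₀ ≤ A (j ω) - c₀ + L / s := by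
      have := abs_le.mp hdiff
      linarith [this.2]
    have h2 : ℓ (f (X ω) - c₀) ≤ ℓ (A (j ω) - c₀ + L / s) := hmono h1
    have h3 : ℓ (A (j ω) - c₀ + L / s) ≤ ℓ (A (j ω) - c₀) + B * (L / s) := by
      have h4 := hlip (A (j ω) - c₀ + L / s) (A (j ω) - c₀)
      rw [show A (j ω) - c₀ + L / s - (A (j ω) - c₀) = L / s by ring,
        abs_of_nonneg (div_nonneg hL hspos.le)] at h4
      have h5 := le_trans (le_abs_self _) h4
      linarith
    have hcon : ℓ (f (X ω) - c₀) ≤ ℓ (F ω - c₀) + L * B / s := by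
      have hFA : F ω = A (j ω) := rfl
      rw [hFA]
      calc ℓ (f (X ω) - c₀) ≤ ℓ (A (j ω) - c₀ + L / s) := h2
        _ ≤ ℓ (A (j ω) - c₀) + B * (L / s) := h3
        _ = ℓ (A (j ω) - c₀) + L * B / s := by ring
    linarith
  -- integrability
  set K : ℝ := |ℓ 0| + B * (M + |c₀|) with hKdef
  have hK : ∀ r : ℝ, |r| ≤ M → |ℓ (r - c₀)| ≤ K := by
    intro r hr
    have h := hlip (r - c₀) 0
    rw [sub_zero] at h
    have h5 : |r - c₀| ≤ M + |c₀| := by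
      have h6 : |r - c₀| ≤ |r| + |c₀| := by
        rw [sub_eq_add_neg]
        simpa using abs_add_le r (-c₀)
      linarith
    have h7 : |ℓ (r - c₀)| - |ℓ 0| ≤ |ℓ (r - c₀) - ℓ 0| := abs_sub_abs_le_abs_sub _ _
    have h8 : B * |r - c₀| ≤ B * (M + |c₀|) := by nlinarith
    rw [hKdef]
    linarith
  have h1int : Integrable (fun ω => ℓ (f (X ω) - c₀)) μ :=
    (integrable_const K).mono'
      (hℓcont.measurable.comp (hfXmeas.sub_const c₀)).aestronglyMeasurable
      (Filter.Eventually.of_forall fun ω => by simpa using hK _ (hfXb ω))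
  have h2int : Integrable (fun ω => ℓ (F ω - c₀)) μ :=
    (integrable_const K).mono'
      (hℓcont.measurable.comp (hFmeas.sub_const c₀)).aestronglyMeasurable
      (Filter.Eventually.of_forall fun ω => by simpa using hK _ (hAb (j ω)))
  have hint3 : Integrable (fun ω => ℓ (F ω - c₀) + L * B / s) μ :=
    h2int.add (integrable_const (L * B / s))
  have hmain := integral_mono_ae h1int hint3 hae
  rw [integral_add h2int (integrable_const _), integral_const, probReal_univ,
    one_smul] at hmain
  show (∫ ω, ℓ (f (X ω) - c₀) ∂μ) ≤ L * B / s + ∫ ω, ℓ (F ω - c₀) ∂μ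
  linarith
end
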